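/- If f : O → S is any function between alphabets, then for all sequences p and q over O, ed(map f p, map f q) ≤ ed(p, q). That is, the edit distance is contractive under elementwise (non-reduced many-to-one) summarization. -/

import Mathlib

open List

structure Levenshtein.Cost (α β δ : Type*) where
  delete : α → δ
  insert : β → δ
  substitute : α → β → δ

def Levenshtein.defaultCost {α : Type*} [DecidableEq α] : Levenshtein.Cost α α ℕ where
  delete _ := 1
  insert _ := 1
  substitute a b := if a = b then 0 else 1

def levenshtein {α β δ : Type*} [AddZeroClass δ] [Min δ] (C : Levenshtein.Cost α β δ) :
    List α → List β → δ
  | [], [] => 0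
  | [], y :: ys => C.insert y + levenshtein C [] ys
  | x :: xs, [] => C.delete x + levenshtein C xs []
  | x :: xs, y :: ys => min (C.delete x + levenshtein C xs (y :: ys))
      (min (C.insert y + levenshtein C (x :: xs) ys) (C.substitute x y + levenshtein C xs ys))

def ed {α : Type*} [DecidableEq α] (p q : List α) : ℕ :=
  levenshtein Levenshtein.defaultCost p q

theorem levenshtein_nil_cons {α β δ : Type*} [AddZeroClass δ] [Min δ]
    (C : Levenshtein.Cost α β δ) (y : β) (ys : List β) :
    levenshtein C [] (y :: ys) = C.insert y + levenshtein C [] ys := by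
  rw [levenshtein]

theorem levenshtein_cons_nil {α β δ : Type*} [AddZeroClass δ] [Min δ]
    (C : Levenshtein.Cost α β δ) (x : α) (xs : List α) :
    levenshtein C (x :: xs) [] = C.delete x + levenshtein C xs [] := by
  rw [levenshtein]

theorem levenshtein_cons_cons {α β δ : Type*} [AddZeroClass δ] [Min δ]
    (C : Levenshtein.Cost α β δ) (x : α) (xs : List α) (y : β) (ys : List β) :
    levenshtein C (x :: xs) (y :: ys) = min (C.delete x + levenshtein C xs (y :: ys))
      (min (C.insert y + levenshtein C (x :: xs) ys) (C.substitute x y + levenshtein C xs ys)) := by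
  rw [levenshtein]

theorem Levenshtein.defaultCost_substitute {α : Type*} [DecidableEq α] (a b : α) :
    (Levenshtein.defaultCost : Levenshtein.Cost α α ℕ).substitute a b = if a = b then 0 else 1 :=
  rfl

theorem stmt2 {O S : Type*} [DecidableEq O] [DecidableEq S] (f : O → S) (p q : List O) :
    ed (p.map f) (q.map f) ≤ ed p q := by
  unfold ed
  induction p generalizing q with
  | nil =>
    induction q with
    | nil => simp [levenshtein]
    | cons y ys ih =>
      simp only [List.map_nil, List.map_cons, levenshtein_nil_cons] at *
      exact add_le_add_right ih _
  | cons x xs ihp =>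
    induction q with
    | nil =>
      simp only [List.map_nil, List.map_cons, levenshtein_cons_nil] at *
      exact add_le_add_right (ihp []) _
    | cons y ys ihq =>
      simp only [List.map_cons, levenshtein_cons_cons] at *
      refine le_min ?_ (le_min ?_ ?_)
      · exact le_trans (min_le_left _ _)
          (add_le_add_right (ihp (y :: ys)) _)
      · refine le_trans (le_trans (min_le_right _ _) (min_le_left _ _)) ?_
        exact add_le_add_right ihq _
      · refine le_trans (le_trans (min_le_right _ _) (min_le_right _ _)) ?_
        refine add_le_add ?_ (ihp ys)
        simp only [Levenshtein.defaultCost_substitute]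
        split <;> split <;> simp_all
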